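/- If f is a piecewise monotone continuous interval map with constant slope s (i.e., affine with slope ±s on each monotonicity piece) with s ≥ 1, then the topological entropy of f equals log s. -/

import Mathlib

open Set Filter

lemma chain_mono {t : ℕ → ℝ} {p : ℕ} (h : ∀ i < p, t i < t (i + 1)) :
    ∀ i j, i ≤ j → j ≤ p → t i ≤ t j := by
  intro i j hij hjp
  induction j with
  | zero => simp_all
  | succ n ih =>
    rcases Nat.eq_or_lt_of_le hij with rfl | hlt
    · exact le_rfl
    · exact le_trans (ih (Nat.lt_succ_iff.mp hlt) (le_trans (Nat.le_succ n) hjp))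
        (le_of_lt (h n (Nat.lt_of_succ_le hjp)))

lemma chain_mem_Icc {t : ℕ → ℝ} {p : ℕ} (h0 : t 0 = 0) (h1 : t p = 1)
    (h : ∀ i < p, t i < t (i + 1)) : ∀ i ≤ p, t i ∈ Set.Icc (0:ℝ) 1 := by
  intro i hi
  constructor
  · rw [← h0]; exact chain_mono h 0 i (Nat.zero_le i) hi
  · rw [← h1]; exact chain_mono h i p hi le_rfl


/-- locate a point in a partition -/
lemma locate {t : ℕ → ℝ} {p : ℕ} (hp : 0 < p) (h0 : t 0 = 0) (h1 : t p = 1)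
    {u : ℝ} (hu0 : 0 ≤ u) (hu1 : u < 1) :
    ∃ a < p, t a ≤ u ∧ u < t (a + 1) := by
  classical
  set A := (Finset.range p).filter (fun a => t a ≤ u) with hA
  have h0A : 0 ∈ A :=
    Finset.mem_filter.mpr ⟨Finset.mem_range.mpr hp, by rw [h0]; exact hu0⟩
  have hne : A.Nonempty := ⟨0, h0A⟩
  have hmem := Finset.mem_filter.mp (A.max'_mem hne)
  have hmax_lt : A.max' hne < p := Finset.mem_range.mp hmem.1
  refine ⟨A.max' hne, hmax_lt, hmem.2, ?_⟩
  by_cases hap : A.max' hne + 1 = p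
  · rw [hap, h1]; exact hu1
  · have hlt : A.max' hne + 1 < p := by omega
    by_contra hcon
    push_neg at hcon
    have hin : A.max' hne + 1 ∈ A :=
      Finset.mem_filter.mpr ⟨Finset.mem_range.mpr hlt, hcon⟩
    have := A.le_max' _ hin
    omega

lemma clip_step {t : ℕ → ℝ} {u v : ℝ} (huv : u ≤ v) {j : ℕ} (hlt : t j < t (j+1))
    (hne : max u (min v (t j)) ≠ max u (min v (t (j+1)))) :
    max u (min v (t j)) ∈ Set.Icc (t j) (t (j+1)) ∧
    max u (min v (t (j+1))) ∈ Set.Icc (t j) (t (j+1)) := by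
  by_cases h1 : t (j+1) ≤ u
  · exfalso; apply hne
    have e1 : max u (min v (t j)) = u := by
      have : t j ≤ u := le_trans (le_of_lt hlt) h1
      rw [min_eq_right (le_trans this huv), max_eq_left this]
    have e2 : max u (min v (t (j+1))) = u := by
      rw [min_eq_right (le_trans h1 huv), max_eq_left h1]
    rw [e1, e2]
  by_cases h2 : v ≤ t j
  · exfalso; apply hne
    have e1 : max u (min v (t j)) = v := by
      rw [min_eq_left h2, max_eq_right huv]
    have e2 : max u (min v (t (j+1))) = v := by
      rw [min_eq_left (le_trans h2 (le_of_lt hlt)), max_eq_right huv]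
    rw [e1, e2]
  push_neg at h1 h2
  constructor
  · constructor
    · rw [min_eq_right (le_of_lt h2)]; exact le_max_right _ _
    · rw [min_eq_right (le_of_lt h2)]
      exact max_le (le_of_lt h1) (le_of_lt hlt)
  · constructor
    · calc t j ≤ min v (t (j+1)) := le_min (le_of_lt h2) (le_of_lt hlt)
        _ ≤ max u (min v (t (j+1))) := le_max_right _ _
    · exact max_le (le_of_lt h1) (min_le_of_right_le le_rfl)

/-- A monotone (or antitone) piece of an affine-slope-`σ` map has length `≤ 1/σ`. -/
lemma piece_bound {F : ℝ → ℝ} {σ : ℝ} {p : ℕ} {t : ℕ → ℝ} (hσ : 0 < σ)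
    (h0 : t 0 = 0) (h1 : t p = 1) (hlt : ∀ i < p, t i < t (i + 1))
    (haf : ∀ i < p, ∃ ε d : ℝ, (ε = 1 ∨ ε = -1) ∧
        ∀ x ∈ Set.Icc (t i) (t (i + 1)), F x = ε * σ * x + d)
    (hM : Set.MapsTo F (Set.Icc 0 1) (Set.Icc 0 1))
    {u v : ℝ} (hu : 0 ≤ u) (huv : u ≤ v) (hv : v ≤ 1)
    (hmono : MonotoneOn F (Set.Icc u v) ∨ AntitoneOn F (Set.Icc u v)) :
    σ * (v - u) ≤ 1 := by
  set x : ℕ → ℝ := fun j => max u (min v (t j)) with hx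
  have hxmem : ∀ j, x j ∈ Set.Icc u v :=
    fun j => ⟨le_max_left _ _, max_le huv (min_le_left _ _)⟩
  have hx01 : ∀ j, x j ∈ Set.Icc (0:ℝ) 1 :=
    fun j => ⟨le_trans hu (hxmem j).1, le_trans (hxmem j).2 hv⟩
  have hx0 : x 0 = u := by
    simp only [hx, h0]
    rw [min_eq_right (le_trans hu huv), max_eq_left hu]
  have hxp : x p = v := by
    simp only [hx, h1]
    rw [min_eq_left hv, max_eq_right huv]
  have hxle : ∀ j < p, x j ≤ x (j+1) := fun j hj =>
    max_le_max le_rfl (min_le_min le_rfl (le_of_lt (hlt j hj)))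
  have step : ∀ j < p, (F (x (j+1)) - F (x j) = σ * (x (j+1) - x j)) ∨
      (F (x (j+1)) - F (x j) = -(σ * (x (j+1) - x j))) := by
    intro j hj
    by_cases heq : x j = x (j+1)
    · left; rw [heq]; ring
    · obtain ⟨hm1, hm2⟩ := clip_step huv (hlt j hj) heq
      obtain ⟨ε, d, hε, hfd⟩ := haf j hj
      rw [hfd _ hm2, hfd _ hm1]
      rcases hε with rfl | rfl
      · left; ring
      · right; ring
  have tele : F v - F u = ∑ j ∈ Finset.range p, (F (x (j+1)) - F (x j)) := by
    rw [Finset.sum_range_sub (fun j => F (x j)), hx0, hxp]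
  have teleΔ : (v - u) = ∑ j ∈ Finset.range p, (x (j+1) - x j) := by
    rw [Finset.sum_range_sub x, hx0, hxp]
  have hFu := hM (hx01 0)
  have hFv := hM (hx01 p)
  rw [hx0] at hFu; rw [hxp] at hFv
  rcases hmono with hmono | hmono
  · have hterm : ∀ j ∈ Finset.range p, F (x (j+1)) - F (x j) = σ * (x (j+1) - x j) := by
      intro j hj
      rw [Finset.mem_range] at hj
      have hge : 0 ≤ F (x (j+1)) - F (x j) :=
        sub_nonneg.mpr (hmono (hxmem j) (hxmem (j+1)) (hxle j hj))
      have hΔ : 0 ≤ x (j+1) - x j := sub_nonneg.mpr (hxle j hj)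
      rcases step j hj with h | h
      · exact h
      · rw [h] at hge ⊢
        have : σ * (x (j+1) - x j) = 0 :=
          le_antisymm (neg_nonneg.mp hge) (mul_nonneg (le_of_lt hσ) hΔ)
        rw [this]; ring
    have : F v - F u = σ * (v - u) := by
      rw [tele, Finset.sum_congr rfl hterm, ← Finset.mul_sum, ← teleΔ]
    linarith [hFu.1, hFv.2]
  · have hterm : ∀ j ∈ Finset.range p, F (x (j+1)) - F (x j) = -(σ * (x (j+1) - x j)) := by
      intro j hj
      rw [Finset.mem_range] at hj
      have hge : F (x (j+1)) - F (x j) ≤ 0 :=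
        sub_nonpos.mpr (hmono (hxmem j) (hxmem (j+1)) (hxle j hj))
      have hΔ : 0 ≤ x (j+1) - x j := sub_nonneg.mpr (hxle j hj)
      rcases step j hj with h | h
      · rw [h] at hge ⊢
        have : σ * (x (j+1) - x j) = 0 :=
          le_antisymm hge (mul_nonneg (le_of_lt hσ) hΔ)
        rw [this]; ring
      · exact h
    have : F v - F u = -(σ * (v - u)) := by
      rw [tele, Finset.sum_congr rfl hterm, Finset.sum_neg_distrib, ← Finset.mul_sum, ← teleΔ]
    linarith [hFu.2, hFv.1]

/-- any lap partition of an affine-slope-σ map has at least σ pieces -/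
lemma lap_lower {F : ℝ → ℝ} {σ : ℝ} {p : ℕ} {t : ℕ → ℝ} (hσ : 0 < σ)
    (h0 : t 0 = 0) (h1 : t p = 1) (hlt : ∀ i < p, t i < t (i + 1))
    (haf : ∀ i < p, ∃ ε d : ℝ, (ε = 1 ∨ ε = -1) ∧
        ∀ x ∈ Set.Icc (t i) (t (i + 1)), F x = ε * σ * x + d)
    (hM : Set.MapsTo F (Set.Icc 0 1) (Set.Icc 0 1))
    {K : ℕ} {τ : ℕ → ℝ} (hτ0 : τ 0 = 0) (hτ1 : τ K = 1)
    (hτlt : ∀ i < K, τ i < τ (i + 1))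
    (hτm : ∀ i < K, MonotoneOn F (Set.Icc (τ i) (τ (i + 1))) ∨
      AntitoneOn F (Set.Icc (τ i) (τ (i + 1)))) :
    σ ≤ (K : ℝ) := by
  have hmem := chain_mem_Icc hτ0 hτ1 hτlt
  have hterm : ∀ i ∈ Finset.range K, σ * (τ (i+1) - τ i) ≤ 1 := by
    intro i hi
    rw [Finset.mem_range] at hi
    exact piece_bound hσ h0 h1 hlt haf hM (hmem i (le_of_lt hi)).1
      (le_of_lt (hτlt i hi)) (hmem (i+1) hi).2 (hτm i hi)
  have htele : ∑ i ∈ Finset.range K, σ * (τ (i+1) - τ i) = σ := by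
    rw [← Finset.mul_sum, Finset.sum_range_sub τ, hτ0, hτ1]; ring
  calc σ = ∑ i ∈ Finset.range K, σ * (τ (i+1) - τ i) := htele.symm
    _ ≤ ∑ i ∈ Finset.range K, 1 := Finset.sum_le_sum hterm
    _ = (K : ℝ) := by simp


lemma affine_mem {m d a b x : ℝ} (h1 : a ≤ x) (h2 : x ≤ b) :
    min (m*a+d) (m*b+d) ≤ m*x+d ∧ m*x+d ≤ max (m*a+d) (m*b+d) := by
  rcases le_total 0 m with hm | hm
  · exact ⟨le_trans (min_le_left _ _) (by nlinarith),
      le_trans (by nlinarith) (le_max_right _ _)⟩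
  · exact ⟨le_trans (min_le_right _ _) (by nlinarith),
      le_trans (by nlinarith) (le_max_left _ _)⟩

lemma affine_inv {m d y : ℝ} (hm : m ≠ 0) : m * ((y - d)/m) + d = y := by
  field_simp
  ring

lemma affine_inv_mem {m d a b y : ℝ} (hm : m ≠ 0) (hab : a ≤ b)
    (h1 : min (m*a+d) (m*b+d) < y) (h2 : y < max (m*a+d) (m*b+d)) :
    a < (y - d)/m ∧ (y - d)/m < b := by
  have hy : m * ((y - d)/m) + d = y := affine_inv hm
  set z := (y - d)/m with hz
  rcases lt_or_gt_of_ne hm with hneg | hpos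
  · have e1 : min (m*a+d) (m*b+d) = m*b+d := min_eq_right (by nlinarith)
    have e2 : max (m*a+d) (m*b+d) = m*a+d := max_eq_left (by nlinarith)
    rw [e1] at h1; rw [e2] at h2
    constructor
    · nlinarith
    · nlinarith
  · have e1 : min (m*a+d) (m*b+d) = m*a+d := min_eq_left (by nlinarith)
    have e2 : max (m*a+d) (m*b+d) = m*b+d := max_eq_right (by nlinarith)
    rw [e1] at h1; rw [e2] at h2
    constructor
    · nlinarith
    · nlinarith

lemma max_sub_min {u v : ℝ} : max u v - min u v = |u - v| := by
  rcases le_total u v with h | h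
  · rw [max_eq_right h, min_eq_left h, abs_of_nonpos (by linarith)]; ring
  · rw [max_eq_left h, min_eq_right h, abs_of_nonneg (by linarith)]

lemma gap_chain {t : ℕ → ℝ} {q : ℕ} {ℓ : ℝ} (h : ∀ i < q, ℓ ≤ t (i + 1) - t i) :
    ∀ a b, a ≤ b → b ≤ q → ℓ * (b - a : ℕ) ≤ t b - t a := by
  intro a b hab hbq
  induction b with
  | zero => interval_cases a; simp
  | succ n ih =>
    rcases Nat.eq_or_lt_of_le hab with rfl | hlt
    · simp
    · have h1 := ih (Nat.lt_succ_iff.mp hlt) (le_trans (Nat.le_succ n) hbq)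
      have h2 := h n (Nat.lt_of_succ_le hbq)
      have : ((n + 1 - a : ℕ) : ℝ) = ((n - a : ℕ) : ℝ) + 1 := by
        have : a ≤ n := Nat.lt_succ_iff.mp hlt
        push_cast [Nat.succ_sub this]; ring
      rw [this]
      nlinarith

lemma refine (F G : ℝ → ℝ) {σ τv ℓ : ℝ} (hσ : 0 < σ) (hτ : 0 < τv) (hℓ : 0 < ℓ)
    {p q : ℕ} {tP tQ : ℕ → ℝ}
    (hP0 : tP 0 = 0) (hP1 : tP p = 1) (hPlt : ∀ i < p, tP i < tP (i+1))
    (hPaf : ∀ i < p, ∃ ε d : ℝ, (ε = 1 ∨ ε = -1) ∧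
      ∀ x ∈ Set.Icc (tP i) (tP (i+1)), F x = ε * σ * x + d)
    (hQ0 : tQ 0 = 0) (hQ1 : tQ q = 1) (hQlt : ∀ i < q, tQ i < tQ (i+1))
    (hQaf : ∀ i < q, ∃ ε d : ℝ, (ε = 1 ∨ ε = -1) ∧
      ∀ x ∈ Set.Icc (tQ i) (tQ (i+1)), G x = ε * τv * x + d)
    (hgap : ∀ i < q, ℓ ≤ tQ (i+1) - tQ i)
    (hM : Set.MapsTo F (Set.Icc 0 1) (Set.Icc 0 1)) :
    ∃ r : ℕ, ∃ tR : ℕ → ℝ, tR 0 = 0 ∧ tR r = 1 ∧ (∀ i < r, tR i < tR (i+1)) ∧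
      (∀ i < r, ∃ ε d : ℝ, (ε = 1 ∨ ε = -1) ∧
        ∀ x ∈ Set.Icc (tR i) (tR (i+1)), G (F x) = ε * (σ*τv) * x + d) ∧
      r ≤ p * (q + 2) ∧ (r : ℝ) ≤ 2*p + σ/ℓ := by
  classical
  have hp0 : 0 < p := by
    rcases Nat.eq_zero_or_pos p with rfl | h
    · rw [hP0] at hP1; norm_num at hP1
    · exact h
  have hq0 : 0 < q := by
    rcases Nat.eq_zero_or_pos q with rfl | h
    · rw [hQ0] at hQ1; norm_num at hQ1
    · exact h
  -- choose slopes and offsets for the pieces of F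
  have hPaf' : ∀ i : ℕ, ∃ εd : ℝ × ℝ, i < p → ((εd.1 = 1 ∨ εd.1 = -1) ∧
      ∀ x ∈ Set.Icc (tP i) (tP (i+1)), F x = εd.1 * σ * x + εd.2) := by
    intro i
    by_cases h : i < p
    · obtain ⟨ε, d, h1, h2⟩ := hPaf i h
      exact ⟨(ε, d), fun _ => ⟨h1, h2⟩⟩
    · exact ⟨(1, 0), fun hc => absurd hc h⟩
  choose εd hεd using hPaf'
  set m : ℕ → ℝ := fun i => (εd i).1 * σ with hm
  set dd : ℕ → ℝ := fun i => (εd i).2 with hdd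
  have habs : ∀ i < p, |m i| = σ := by
    intro i hi
    rcases (hεd i hi).1 with h | h
    · simp [hm, h, abs_of_pos hσ]
    · simp [hm, h, abs_of_pos hσ]
  have hmne : ∀ i < p, m i ≠ 0 := by
    intro i hi h
    have := habs i hi
    rw [h, abs_zero] at this
    linarith
  have hfd : ∀ i < p, ∀ x ∈ Set.Icc (tP i) (tP (i+1)), F x = m i * x + dd i := by
    intro i hi x hx
    exact (hεd i hi).2 x hx
  set α : ℕ → ℝ := fun i => min (m i * tP i + dd i) (m i * tP (i+1) + dd i) with hα
  set β : ℕ → ℝ := fun i => max (m i * tP i + dd i) (m i * tP (i+1) + dd i) with hβ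
  set S : Finset ℝ := ((Finset.range (p+1)).image tP) ∪ (Finset.range p).biUnion (fun i =>
    (((Finset.range (q+1)).image tQ).filter (fun y => α i < y ∧ y < β i)).image
      (fun y => (y - dd i)/(m i))) with hS
  have hPmem : ∀ i ≤ p, tP i ∈ S := by
    intro i hi
    apply Finset.mem_union_left
    exact Finset.mem_image.mpr ⟨i, Finset.mem_range.mpr (Nat.lt_succ_of_le hi), rfl⟩
  have hS01 : ∀ x ∈ S, x ∈ Set.Icc (0:ℝ) 1 := by
    intro x hx
    rw [hS, Finset.mem_union] at hx
    rcases hx with hx | hx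
    · obtain ⟨i, hi, rfl⟩ := Finset.mem_image.mp hx
      exact chain_mem_Icc hP0 hP1 hPlt i (Nat.lt_succ_iff.mp (Finset.mem_range.mp hi))
    · obtain ⟨i, hi, hx⟩ := Finset.mem_biUnion.mp hx
      rw [Finset.mem_range] at hi
      obtain ⟨y, hy, rfl⟩ := Finset.mem_image.mp hx
      obtain ⟨hy1, hy2, hy3⟩ := Finset.mem_filter.mp hy
      have := affine_inv_mem (hmne i hi) (le_of_lt (hPlt i hi)) hy2 hy3
      have hP01 := chain_mem_Icc hP0 hP1 hPlt
      constructor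
      · exact le_trans (hP01 i (le_of_lt hi)).1 (le_of_lt this.1)
      · exact le_trans (le_of_lt this.2) (hP01 (i+1) hi).2
  have h0S : (0:ℝ) ∈ S := by rw [← hP0]; exact hPmem 0 (Nat.zero_le p)
  have h1S : (1:ℝ) ∈ S := by rw [← hP1]; exact hPmem p le_rfl
  set N := S.card with hN
  have hN2 : 2 ≤ N := by
    rw [hN]
    exact Finset.one_lt_card.mpr ⟨0, h0S, 1, h1S, by norm_num⟩
  set iso := S.orderIsoOfFin (rfl : S.card = N) with hiso
  set tR : ℕ → ℝ := fun i => if h : i < N then (iso ⟨i, h⟩ : ℝ) else 1 with htR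
  set r := N - 1 with hr
  have htRmem : ∀ i (h : i < N), tR i ∈ S := by
    intro i h
    rw [htR]; simp only [dif_pos h]
    exact (iso ⟨i, h⟩).2
  have htRlt : ∀ i j, i < j → j < N → tR i < tR j := by
    intro i j hij hj
    have hi : i < N := lt_trans hij hj
    rw [htR]; simp only [dif_pos hi, dif_pos hj]
    exact iso.strictMono (Fin.mk_lt_mk.mpr hij)
  have htRle : ∀ i j, i ≤ j → j < N → tR i ≤ tR j := by
    intro i j hij hj
    rcases Nat.eq_or_lt_of_le hij with rfl | h
    · exact le_rfl
    · exact le_of_lt (htRlt i j h hj)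
  have htRsurj : ∀ x ∈ S, ∃ j, ∃ hj : j < N, tR j = x := by
    intro x hx
    refine ⟨(iso.symm ⟨x, hx⟩).val, (iso.symm ⟨x, hx⟩).isLt, ?_⟩
    rw [htR]; simp only [dif_pos (iso.symm ⟨x, hx⟩).isLt]
    have : iso ⟨(iso.symm ⟨x, hx⟩).val, (iso.symm ⟨x, hx⟩).isLt⟩ = iso (iso.symm ⟨x, hx⟩) := by
      congr
    rw [dif_pos (show (iso.symm ⟨x, hx⟩).val < N from (iso.symm ⟨x, hx⟩).isLt), this, OrderIso.apply_symm_apply]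
  have htR0 : tR 0 = 0 := by
    obtain ⟨j, hj, hje⟩ := htRsurj 0 h0S
    have h1 : tR 0 ≤ 0 := by rw [← hje]; exact htRle 0 j (Nat.zero_le j) hj
    have h2 : 0 ≤ tR 0 := (hS01 _ (htRmem 0 (by omega))).1
    linarith
  have htRr : tR r = 1 := by
    obtain ⟨j, hj, hje⟩ := htRsurj 1 h1S
    have h1 : (1:ℝ) ≤ tR r := by rw [← hje]; exact htRle j r (by omega) (by omega)
    have h2 : tR r ≤ 1 := (hS01 _ (htRmem r (by omega))).2
    linarith
  have hlapR : ∀ i < r, tR i < tR (i+1) := fun i hi => htRlt i (i+1) (Nat.lt_succ_self i) (by omega)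
  have hsep : ∀ i < r, ∀ x ∈ S, x ≤ tR i ∨ tR (i+1) ≤ x := by
    intro i hi x hx
    obtain ⟨j, hj, rfl⟩ := htRsurj x hx
    rcases le_or_gt j i with h | h
    · exact Or.inl (htRle j i h (by omega))
    · exact Or.inr (htRle (i+1) j h hj)
  -- main affinity claim
  have main : ∀ i < r, ∃ ε d : ℝ, (ε = 1 ∨ ε = -1) ∧
      ∀ x ∈ Set.Icc (tR i) (tR (i+1)), G (F x) = ε * (σ*τv) * x + d := by
    intro i hi
    have hiN : i < N := by omega
    have hi1N : i + 1 < N := by omega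
    have hRlt := hlapR i hi
    have hR0 : tR i ∈ Set.Icc (0:ℝ) 1 := hS01 _ (htRmem i hiN)
    have hR1 : tR (i+1) ∈ Set.Icc (0:ℝ) 1 := hS01 _ (htRmem (i+1) hi1N)
    -- locate in P
    obtain ⟨a, ha, haP1, haP2⟩ := locate hp0 hP0 hP1 hR0.1 (lt_of_lt_of_le hRlt hR1.2)
    have hsubP : tR (i+1) ≤ tP (a+1) := by
      rcases hsep i hi (tP (a+1)) (hPmem (a+1) ha) with h | h
      · linarith
      · exact h
    have hxP : ∀ x ∈ Set.Icc (tR i) (tR (i+1)), x ∈ Set.Icc (tP a) (tP (a+1)) := by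
      intro x hx
      exact ⟨le_trans haP1 hx.1, le_trans hx.2 hsubP⟩
    -- image endpoints
    set α' := min (m a * tR i + dd a) (m a * tR (i+1) + dd a) with hα'
    set β' := max (m a * tR i + dd a) (m a * tR (i+1) + dd a) with hβ'
    have hFi : F (tR i) = m a * tR i + dd a := hfd a ha _ (hxP _ ⟨le_rfl, le_of_lt hRlt⟩)
    have hFi1 : F (tR (i+1)) = m a * tR (i+1) + dd a := hfd a ha _ (hxP _ ⟨le_of_lt hRlt, le_rfl⟩)
    have hα'01 : α' ∈ Set.Icc (0:ℝ) 1 := by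
      rw [hα', ← hFi, ← hFi1]
      rcases min_choice (F (tR i)) (F (tR (i+1))) with h | h <;> rw [h]
      · exact hM hR0
      · exact hM hR1
    have hβ'01 : β' ∈ Set.Icc (0:ℝ) 1 := by
      rw [hβ', ← hFi, ← hFi1]
      rcases max_choice (F (tR i)) (F (tR (i+1))) with h | h <;> rw [h]
      · exact hM hR0
      · exact hM hR1
    have hα'β' : α' < β' := by
      rw [hα', hβ']
      apply min_lt_max.mpr
      intro hcon
      have : m a * (tR i - tR (i+1)) = 0 := by linarith [hcon]
      rcases mul_eq_zero.mp this with h | h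
      · exact hmne a ha h
      · linarith
    -- α β of piece a bound α' β'
    have hαα' : α a ≤ α' := by
      rw [hα, hα']
      have h1 := affine_mem (m := m a) (d := dd a) (hxP _ ⟨le_rfl, le_of_lt hRlt⟩).1
        (hxP _ ⟨le_rfl, le_of_lt hRlt⟩).2
      have h2 := affine_mem (m := m a) (d := dd a) (hxP _ ⟨le_of_lt hRlt, le_rfl⟩).1
        (hxP _ ⟨le_of_lt hRlt, le_rfl⟩).2
      exact le_min h1.1 h2.1
    have hββ' : β' ≤ β a := by
      rw [hβ, hβ']
      have h1 := affine_mem (m := m a) (d := dd a) (hxP _ ⟨le_rfl, le_of_lt hRlt⟩).1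
        (hxP _ ⟨le_rfl, le_of_lt hRlt⟩).2
      have h2 := affine_mem (m := m a) (d := dd a) (hxP _ ⟨le_of_lt hRlt, le_rfl⟩).1
        (hxP _ ⟨le_of_lt hRlt, le_rfl⟩).2
      exact max_le h1.2 h2.2
    -- locate in Q
    obtain ⟨b, hb, hbQ1, hbQ2⟩ := locate hq0 hQ0 hQ1 hα'01.1 (lt_of_lt_of_le hα'β' hβ'01.2)
    have hsubQ : β' ≤ tQ (b+1) := by
      by_contra hcon
      push_neg at hcon
      -- tQ (b+1) is strictly inside (α', β'), so its preimage is an S point inside (tR i, tR (i+1))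
      have hyin : α a < tQ (b+1) ∧ tQ (b+1) < β a :=
        ⟨lt_of_le_of_lt hαα' hbQ2, lt_of_lt_of_le hcon hββ'⟩
      set z := (tQ (b+1) - dd a)/(m a) with hz
      have hzS : z ∈ S := by
        apply Finset.mem_union_right
        apply Finset.mem_biUnion.mpr
        refine ⟨a, Finset.mem_range.mpr ha, ?_⟩
        apply Finset.mem_image.mpr
        refine ⟨tQ (b+1), ?_, rfl⟩
        apply Finset.mem_filter.mpr
        exact ⟨Finset.mem_image.mpr ⟨b+1, Finset.mem_range.mpr (by omega), rfl⟩, hyin.1, hyin.2⟩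
      have hzin : tR i < z ∧ z < tR (i+1) := by
        rw [hz]
        exact affine_inv_mem (hmne a ha) (le_of_lt hRlt) hbQ2 hcon
      rcases hsep i hi z hzS with h | h
      · linarith [hzin.1]
      · linarith [hzin.2]
    -- composite formula
    obtain ⟨ε2, d2, hε2, hG⟩ := hQaf b hb
    refine ⟨(εd a).1 * ε2, ε2 * τv * dd a + d2, ?_, ?_⟩
    · rcases (hεd a ha).1 with h | h <;> rcases hε2 with h2 | h2 <;>
        simp [h, h2]
    · intro x hx
      have hFx : F x = m a * x + dd a := hfd a ha x (hxP x hx)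
      have hFxm : F x ∈ Set.Icc (tQ b) (tQ (b+1)) := by
        rw [hFx]
        have := affine_mem (m := m a) (d := dd a) hx.1 hx.2
        constructor
        · exact le_trans hbQ1 this.1
        · exact le_trans this.2 hsubQ
      rw [hG (F x) hFxm, hFx, hm]
      ring
  -- cardinality bounds
  have hcards : ∀ i ∈ Finset.range p,
      ((((Finset.range (q+1)).image tQ).filter (fun y => α i < y ∧ y < β i)).image
        (fun y => (y - dd i)/(m i))).card ≤
      (((Finset.range (q+1)).filter (fun j => α i < tQ j ∧ tQ j < β i))).card := by
    intro i _
    apply le_trans (Finset.card_image_le)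
    rw [Finset.filter_image]
    exact Finset.card_image_le
  have hNbound : N ≤ (p+1) + ∑ i ∈ Finset.range p,
      (((Finset.range (q+1)).filter (fun j => α i < tQ j ∧ tQ j < β i))).card := by
    rw [hN, hS]
    apply le_trans (Finset.card_union_le _ _)
    have h1 : (Finset.image tP (Finset.range (p+1))).card ≤ p + 1 :=
      le_trans Finset.card_image_le (by simp)
    have h2 := Finset.card_biUnion_le (s := Finset.range p) (t := fun i =>
      (((Finset.range (q+1)).image tQ).filter (fun y => α i < y ∧ y < β i)).image
        (fun y => (y - dd i)/(m i)))
    exact add_le_add h1 (le_trans h2 (Finset.sum_le_sum hcards))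
  -- crude bound
  have hcrude : r ≤ p * (q + 2) := by
    have h1 : ∀ i ∈ Finset.range p,
        (((Finset.range (q+1)).filter (fun j => α i < tQ j ∧ tQ j < β i))).card ≤ q + 1 := by
      intro i _
      exact le_trans (Finset.card_filter_le _ _) (by simp)
    have h2 : N ≤ (p+1) + p * (q+1) := by
      apply le_trans hNbound
      apply add_le_add le_rfl
      apply le_trans (Finset.sum_le_sum h1)
      simp [mul_comm]
    have : r ≤ p + p * (q + 1) := by omega
    calc r ≤ p + p * (q+1) := this
      _ = p * (q+2) := by ring
  -- sharp bound
  have hsharp : (r : ℝ) ≤ 2*p + σ/ℓ := by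
    have hpiece : ∀ i ∈ Finset.range p,
        ((((Finset.range (q+1)).filter (fun j => α i < tQ j ∧ tQ j < β i))).card : ℝ) ≤
        σ * (tP (i+1) - tP i) / ℓ + 1 := by
      intro i hip
      rw [Finset.mem_range] at hip
      set J := ((Finset.range (q+1)).filter (fun j => α i < tQ j ∧ tQ j < β i)) with hJ
      have hβα : β i - α i = σ * (tP (i+1) - tP i) := by
        rw [hβ, hα, max_sub_min]
        have : m i * tP i + dd i - (m i * tP (i+1) + dd i) = m i * (tP i - tP (i+1)) := by ring
        rw [this, abs_mul, habs i hip, abs_of_nonpos (by linarith [hPlt i hip])]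
        ring
      have hΔpos : 0 < tP (i+1) - tP i := by linarith [hPlt i hip]
      rcases J.eq_empty_or_nonempty with he | hne
      · rw [he]
        simp only [Finset.card_empty, Nat.cast_zero]
        positivity
      · set a0 := J.min' hne with ha0
        set b0 := J.max' hne with hb0
        have ha0m := J.min'_mem hne
        have hb0m := J.max'_mem hne
        have ha0p := Finset.mem_filter.mp ha0m
        have hb0p := Finset.mem_filter.mp hb0m
        rw [Finset.mem_range] at ha0p hb0p
        have hab : a0 ≤ b0 := J.min'_le _ (J.max'_mem hne)
        have hsub : J ⊆ Finset.Icc a0 b0 := by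
          intro j hj
          exact Finset.mem_Icc.mpr ⟨J.min'_le _ hj, J.le_max' _ hj⟩
        have hcard : J.card ≤ b0 + 1 - a0 := by
          apply le_trans (Finset.card_le_card hsub)
          rw [Nat.card_Icc]
        have hgc : ℓ * ((b0 - a0 : ℕ) : ℝ) ≤ tQ b0 - tQ a0 :=
          gap_chain hgap a0 b0 hab (by omega)
        have hlt2 : tQ b0 - tQ a0 < β i - α i := by
          have := ha0p.2.1
          have := hb0p.2.2
          linarith
        have hba : ((b0 - a0 : ℕ) : ℝ) ≤ σ * (tP (i+1) - tP i) / ℓ := by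
          rw [le_div_iff₀ hℓ]
          calc ((b0 - a0 : ℕ) : ℝ) * ℓ = ℓ * ((b0 - a0 : ℕ) : ℝ) := by ring
            _ ≤ tQ b0 - tQ a0 := hgc
            _ ≤ σ * (tP (i+1) - tP i) := by linarith
        calc (J.card : ℝ) ≤ ((b0 + 1 - a0 : ℕ) : ℝ) := by exact_mod_cast hcard
          _ = ((b0 - a0 : ℕ) : ℝ) + 1 := by
              have : b0 + 1 - a0 = (b0 - a0) + 1 := by omega
              rw [this]; push_cast; ring
          _ ≤ σ * (tP (i+1) - tP i) / ℓ + 1 := by linarith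
    have hsum : ∑ i ∈ Finset.range p, (σ * (tP (i+1) - tP i) / ℓ + 1) = σ/ℓ + p := by
      rw [Finset.sum_add_distrib]
      have : ∑ i ∈ Finset.range p, σ * (tP (i+1) - tP i) / ℓ
          = (σ/ℓ) * ∑ i ∈ Finset.range p, (tP (i+1) - tP i) := by
        rw [Finset.mul_sum]
        apply Finset.sum_congr rfl
        intro i _
        ring
      rw [this, Finset.sum_range_sub tP, hP0, hP1]
      simp
    have hNr : (N : ℝ) ≤ (p+1 : ℝ) + (σ/ℓ + p) := by
      have h1 : (N : ℝ) ≤ (p+1 : ℝ) + ∑ i ∈ Finset.range p,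
          ((((Finset.range (q+1)).filter (fun j => α i < tQ j ∧ tQ j < β i))).card : ℝ) := by
        have := hNbound
        push_cast
        exact_mod_cast Nat.cast_le.mpr this
      apply le_trans h1
      apply add_le_add le_rfl
      rw [← hsum]
      exact Finset.sum_le_sum hpiece
    have hrN : (r : ℝ) = (N : ℝ) - 1 := by
      rw [hr]
      have : (1:ℕ) ≤ N := by omega
      push_cast [Nat.cast_sub this]
      ring
    rw [hrN]
    push_cast at hNr ⊢
    linarith
  exact ⟨r, tR, htR0, htRr, hlapR, main, hcrude, hsharp⟩

def AffP (F : ℝ → ℝ) (σ : ℝ) (p : ℕ) (t : ℕ → ℝ) : Prop :=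
  t 0 = 0 ∧ t p = 1 ∧ (∀ i < p, t i < t (i + 1)) ∧
  ∀ i < p, ∃ ε d : ℝ, (ε = 1 ∨ ε = -1) ∧
    ∀ x ∈ Set.Icc (t i) (t (i + 1)), F x = ε * σ * x + d

lemma exists_gap {t : ℕ → ℝ} {q : ℕ} (hq : 0 < q) (hlt : ∀ i < q, t i < t (i+1)) :
    ∃ ℓ : ℝ, 0 < ℓ ∧ ∀ i < q, ℓ ≤ t (i+1) - t i := by
  have hne : (Finset.range q).Nonempty := ⟨0, Finset.mem_range.mpr hq⟩
  refine ⟨(Finset.range q).inf' hne (fun i => t (i+1) - t i), ?_, ?_⟩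
  · rw [Finset.lt_inf'_iff]
    intro i hi
    rw [Finset.mem_range] at hi
    linarith [hlt i hi]
  · intro i hi
    exact Finset.inf'_le _ (Finset.mem_range.mpr hi)

section iter
variable {f : ℝ → ℝ} {s : ℝ}

lemma refine_iter (hs : 1 ≤ s) (hm : Set.MapsTo f (Set.Icc 0 1) (Set.Icc 0 1)) {u v : ℕ} {p q : ℕ} {tP tQ : ℕ → ℝ} {ℓ : ℝ} (hℓ : 0 < ℓ)
    (hP : AffP (f^[u]) (s^u) p tP) (hQ : AffP (f^[v]) (s^v) q tQ)
    (hgap : ∀ i < q, ℓ ≤ tQ (i+1) - tQ i) :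
    ∃ r : ℕ, ∃ tR : ℕ → ℝ, AffP (f^[u+v]) (s^(u+v)) r tR ∧
      r ≤ p * (q + 2) ∧ (r : ℝ) ≤ 2*p + (s^u)/ℓ := by
  have hs0 : (0:ℝ) < s := lt_of_lt_of_le one_pos hs
  obtain ⟨hP0, hP1, hPlt, hPaf⟩ := hP
  obtain ⟨hQ0, hQ1, hQlt, hQaf⟩ := hQ
  obtain ⟨r, tR, h0, h1, hlt, haf, hc, hsh⟩ := refine (f^[u]) (f^[v]) (pow_pos hs0 u)
    (pow_pos hs0 v) hℓ hP0 hP1 hPlt hPaf hQ0 hQ1 hQlt hQaf hgap (hm.iterate u)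
  refine ⟨r, tR, ⟨h0, h1, hlt, ?_⟩, hc, hsh⟩
  intro i hi
  obtain ⟨ε, d, hε, hfd⟩ := haf i hi
  refine ⟨ε, d, hε, ?_⟩
  intro x hx
  have h2 : f^[u+v] x = f^[v] (f^[u] x) := by
    rw [add_comm]; exact Function.iterate_add_apply f v u x
  rw [h2, hfd x hx, pow_add]

lemma AP_one (haff : ∃ k : ℕ, 0 < k ∧ ∃ t : ℕ → ℝ, t 0 = 0 ∧ t k = 1 ∧
      (∀ i < k, t i < t (i + 1)) ∧
      ∀ i < k, ∃ ε d : ℝ, (ε = 1 ∨ ε = -1) ∧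
        ∀ x ∈ Set.Icc (t i) (t (i + 1)), f x = ε * s * x + d) :
    ∃ k : ℕ, 0 < k ∧ ∃ t : ℕ → ℝ, AffP (f^[1]) (s^1) k t := by
  obtain ⟨k, hk, t, h0, h1, hlt, haf⟩ := haff
  refine ⟨k, hk, t, h0, h1, hlt, ?_⟩
  intro i hi
  obtain ⟨ε, d, hε, hfd⟩ := haf i hi
  exact ⟨ε, d, hε, fun x hx => by
    rw [Function.iterate_one, pow_one]; exact hfd x hx⟩

lemma AP_exists (hs : 1 ≤ s) (hm : Set.MapsTo f (Set.Icc 0 1) (Set.Icc 0 1)) {k : ℕ} {t1 : ℕ → ℝ} (hk : 0 < k) (h1 : AffP (f^[1]) (s^1) k t1) :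
    ∀ n, 1 ≤ n → ∃ p : ℕ, ∃ t : ℕ → ℝ, AffP (f^[n]) (s^n) p t ∧ p ≤ (k+2)^n := by
  obtain ⟨ℓ1, hℓ1, hgap1⟩ := exists_gap hk h1.2.2.1
  intro n hn
  induction n with
  | zero => omega
  | succ n ih =>
    rcases Nat.eq_zero_or_pos n with rfl | hn0
    · refine ⟨k, t1, h1, ?_⟩
      calc k ≤ k + 2 := by omega
        _ = (k+2)^1 := (pow_one _).symm
    · obtain ⟨p, t, hP, hpb⟩ := ih hn0
      obtain ⟨r, tR, hR, hc, _⟩ := refine_iter hs hm hℓ1 hP h1 hgap1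
      refine ⟨r, tR, hR, ?_⟩
      calc r ≤ p * (k + 2) := hc
        _ ≤ (k+2)^n * (k+2) := Nat.mul_le_mul_right _ hpb
        _ = (k+2)^(n+1) := by ring
end iter

section iter2
variable {f : ℝ → ℝ} {s : ℝ}

lemma B_exists (hs : 1 ≤ s) (hm : Set.MapsTo f (Set.Icc 0 1) (Set.Icc 0 1))
    {m qm : ℕ} {tQ : ℕ → ℝ} (hQ : AffP (f^[m]) (s^m) qm tQ)
    {ℓ : ℝ} (hℓ : 0 < ℓ) (hgap : ∀ i < qm, ℓ ≤ tQ (i+1) - tQ i) :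
    ∀ n, 1 ≤ n → ∃ p : ℕ, ∃ t : ℕ → ℝ, AffP (f^[n*m]) (s^(n*m)) p t ∧
      (p:ℝ) ≤ ((qm:ℝ) + n * (1/ℓ)) * (max 2 (s^m))^n := by
  have hs0 : (0:ℝ) < s := lt_of_lt_of_le one_pos hs
  have hM2 : (2:ℝ) ≤ max 2 (s^m) := le_max_left _ _
  have hsmM : s^m ≤ max 2 (s^m) := le_max_right _ _
  have h1ℓ : (0:ℝ) < 1/ℓ := by positivity
  intro n hn
  induction n with
  | zero => omega
  | succ n ih =>
    rcases Nat.eq_zero_or_pos n with rfl | hn0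
    · refine ⟨qm, tQ, by simpa using hQ, ?_⟩
      have hMn : (1:ℝ) ≤ (max 2 (s^m))^1 := by
        rw [pow_one]; linarith
      have hqm0 : (0:ℝ) ≤ (qm:ℝ) := Nat.cast_nonneg _
      push_cast
      nlinarith
    · obtain ⟨p, t, hP, hpb⟩ := ih hn0
      obtain ⟨r, tR, hR, _, hsh⟩ := refine_iter hs hm hℓ hP hQ hgap
      have hnm : n*m + m = (n+1)*m := by ring
      rw [hnm] at hR
      refine ⟨r, tR, hR, ?_⟩
      set M := max 2 (s^m) with hMdef
      have hMn : (0:ℝ) < M^n := pow_pos (by linarith) n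
      have hsnm : (s:ℝ)^(n*m) ≤ M^n := by
        rw [mul_comm, pow_mul]
        exact pow_le_pow_left₀ (pow_nonneg (le_of_lt hs0) m) hsmM n
      have hdiv : (s:ℝ)^(n*m)/ℓ ≤ M^n * (1/ℓ) := by
        rw [div_eq_mul_one_div]
        exact mul_le_mul_of_nonneg_right hsnm (le_of_lt h1ℓ)
      have hqm0 : (0:ℝ) ≤ (qm:ℝ) := Nat.cast_nonneg _
      have hn0' : (0:ℝ) ≤ (n:ℝ) := Nat.cast_nonneg _
      have hpow : M^(n+1) = M * M^n := by rw [pow_succ]; ring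
      push_cast
      calc (r:ℝ) ≤ 2*p + (s^(n*m))/ℓ := hsh
        _ ≤ 2*(((qm:ℝ) + n * (1/ℓ)) * M^n) + M^n * (1/ℓ) := by linarith
        _ ≤ ((qm:ℝ) + (n+1) * (1/ℓ)) * M^(n+1) := by
            rw [hpow]
            nlinarith [mul_nonneg (sub_nonneg.mpr hM2)
                (mul_nonneg (by positivity : (0:ℝ) ≤ (qm:ℝ) + ((n:ℝ)+1)*(1/ℓ)) hMn.le),
              mul_pos hMn h1ℓ]

lemma AffP_pos {F : ℝ → ℝ} {σ : ℝ} {p : ℕ} {t : ℕ → ℝ} (h : AffP F σ p t) : 0 < p := by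
  rcases Nat.eq_zero_or_pos p with rfl | h'
  · obtain ⟨h0, h1, _, _⟩ := h
    rw [h0] at h1; norm_num at h1
  · exact h'

lemma tail_bound (hs : 1 ≤ s) (hm : Set.MapsTo f (Set.Icc 0 1) (Set.Icc 0 1))
    {k : ℕ} {t1 : ℕ → ℝ} (hk : 0 < k) (h1 : AffP (f^[1]) (s^1) k t1)
    {m qm : ℕ} {tQ : ℕ → ℝ} (hm1 : 1 ≤ m) (hQ : AffP (f^[m]) (s^m) qm tQ)
    {ℓ : ℝ} (hℓ : 0 < ℓ) (hgap : ∀ i < qm, ℓ ≤ tQ (i+1) - tQ i) :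
    ∀ n, m ≤ n → ∃ p : ℕ, ∃ t : ℕ → ℝ, AffP (f^[n]) (s^n) p t ∧
      (p:ℝ) ≤ (((qm:ℝ) + (n/m : ℕ) * (1/ℓ)) * (max 2 (s^m))^(n/m : ℕ)) *
        ((((k+2)^m : ℕ) : ℝ) + 2) := by
  intro n hn
  have hm0 : 0 < m := hm1
  have hq1 : 1 ≤ n / m := (Nat.one_le_div_iff hm0).mpr hn
  obtain ⟨pB, tB, hB, hBb⟩ := B_exists hs hm hQ hℓ hgap (n/m) hq1
  have hBpos : (0:ℝ) ≤ ((qm:ℝ) + ((n/m : ℕ):ℝ) * (1/ℓ)) * (max 2 (s^m))^(n/m : ℕ) := by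
    have h2 : (0:ℝ) < max 2 (s^m) := lt_of_lt_of_le two_pos (le_max_left _ _)
    positivity
  have hD0 : (0:ℝ) ≤ ((((k+2)^m : ℕ)) : ℝ) + 2 := by
    have := Nat.cast_nonneg (α := ℝ) ((k+2)^m)
    linarith
  have hD1 : (1:ℝ) ≤ ((((k+2)^m : ℕ)) : ℝ) + 2 := by
    have := Nat.cast_nonneg (α := ℝ) ((k+2)^m)
    linarith
  have hnd : m * (n/m) + n % m = n := Nat.div_add_mod n m
  by_cases hr : n % m = 0
  · refine ⟨pB, tB, ?_, ?_⟩
    · have he : (n/m)*m = n := Nat.div_mul_cancel (Nat.dvd_of_mod_eq_zero hr)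
      rw [← he]; exact hB
    · exact le_trans hBb (le_mul_of_one_le_right hBpos hD1)
  · obtain ⟨pr, tr, hAr, hprb⟩ := AP_exists hs hm hk h1 (n % m) (by omega)
    obtain ⟨ℓr, hℓr, hgapr⟩ := exists_gap (AffP_pos hAr) hAr.2.2.1
    obtain ⟨p, t, hP, hc, _⟩ := refine_iter hs hm hℓr hB hAr hgapr
    have he : (n/m)*m + n % m = n := Nat.div_add_mod' n m
    rw [he] at hP
    refine ⟨p, t, hP, ?_⟩
    have hcn : p ≤ pB * ((k+2)^m + 2) := by
      apply le_trans hc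
      apply Nat.mul_le_mul_left
      have : (k+2)^(n % m) ≤ (k+2)^m :=
        Nat.pow_le_pow_right (by omega) (le_of_lt (Nat.mod_lt n hm0))
      omega
    calc (p:ℝ) ≤ (pB:ℝ) * (((((k+2)^m : ℕ)) : ℝ) + 2) := by exact_mod_cast hcn
      _ ≤ _ := mul_le_mul_of_nonneg_right hBb hD0
end iter2

lemma aux_tendsto {a b : ℝ} (ha : 0 < a) :
    Tendsto (fun n : ℕ => Real.log (a * n + b) / n) atTop (nhds 0) := by
  have houter := Real.tendsto_pow_log_div_mul_add_atTop (1/a) (-b/a) 1 (by positivity)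
  have hinner : Tendsto (fun x : ℝ => a * x + b) atTop atTop :=
    tendsto_atTop_add_const_right _ b (tendsto_id.const_mul_atTop' ha)
  have hcomp := houter.comp hinner
  have heq : ∀ x : ℝ, x ≠ 0 →
      Real.log (a * x + b) ^ 1 / (1/a * (a * x + b) + -b/a) = Real.log (a * x + b) / x := by
    intro x hx
    rw [pow_one]
    congr 1
    field_simp
    ring
  have hcomp' : Tendsto (fun x : ℝ => Real.log (a * x + b) / x) atTop (nhds 0) := by
    apply hcomp.congr'
    filter_upwards [eventually_ne_atTop 0] with x hx
    exact heq x hx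
  exact hcomp'.comp tendsto_natCast_atTop_atTop

/-- `k` intervals of monotonicity partitioning `[a,b]`. -/
def IsLapPartition (f : ℝ → ℝ) (a b : ℝ) (k : ℕ) : Prop :=
  ∃ t : ℕ → ℝ, t 0 = a ∧ t k = b ∧ (∀ i < k, t i < t (i + 1)) ∧
    ∀ i < k, MonotoneOn f (Set.Icc (t i) (t (i + 1))) ∨
      AntitoneOn f (Set.Icc (t i) (t (i + 1)))

/-- The lap number: the minimal number of intervals of monotonicity of `f` on `[a,b]`. -/
noncomputable def lapNumber (f : ℝ → ℝ) (a b : ℝ) : ℕ :=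
  sInf {k | 0 < k ∧ IsLapPartition f a b k}


lemma AffP_isLap {F : ℝ → ℝ} {σ : ℝ} {p : ℕ} {t : ℕ → ℝ} (hσ : 0 < σ)
    (h : AffP F σ p t) : IsLapPartition F 0 1 p := by
  obtain ⟨h0, h1, hlt, haf⟩ := h
  refine ⟨t, h0, h1, hlt, ?_⟩
  intro i hi
  obtain ⟨ε, d, hε, hfd⟩ := haf i hi
  rcases hε with rfl | rfl
  · left
    intro x hx y hy hxy
    rw [hfd x hx, hfd y hy]
    nlinarith
  · right
    intro x hx y hy hxy
    rw [hfd x hx, hfd y hy]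
    nlinarith

lemma lap_le {F : ℝ → ℝ} {σ : ℝ} {p : ℕ} {t : ℕ → ℝ} (hσ : 0 < σ)
    (h : AffP F σ p t) : lapNumber F 0 1 ≤ p :=
  Nat.sInf_le ⟨AffP_pos h, AffP_isLap hσ h⟩

lemma lap_mem {F : ℝ → ℝ} {σ : ℝ} {p : ℕ} {t : ℕ → ℝ} (hσ : 0 < σ)
    (h : AffP F σ p t) :
    0 < lapNumber F 0 1 ∧ IsLapPartition F 0 1 (lapNumber F 0 1) :=
  Nat.sInf_mem (⟨p, AffP_pos h, AffP_isLap hσ h⟩ :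
    {k | 0 < k ∧ IsLapPartition F 0 1 k}.Nonempty)

set_option maxHeartbeats 1000000 in
/-- A piecewise monotone continuous interval map with constant slope `s ≥ 1`
has topological entropy `log s`. -/
theorem stmt0 (f : ℝ → ℝ) (s : ℝ) (hs : 1 ≤ s)
    (hc : ContinuousOn f (Set.Icc 0 1))
    (hm : Set.MapsTo f (Set.Icc 0 1) (Set.Icc 0 1))
    (haff : ∃ k : ℕ, 0 < k ∧ ∃ t : ℕ → ℝ, t 0 = 0 ∧ t k = 1 ∧
      (∀ i < k, t i < t (i + 1)) ∧
      ∀ i < k, ∃ ε d : ℝ, (ε = 1 ∨ ε = -1) ∧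
        ∀ x ∈ Set.Icc (t i) (t (i + 1)), f x = ε * s * x + d) :
    Tendsto (fun n : ℕ => Real.log (lapNumber (f^[n]) 0 1) / n) atTop
      (nhds (Real.log s)) := by
  have hs0 : (0:ℝ) < s := lt_of_lt_of_le one_pos hs
  obtain ⟨k, hk, t1, h1⟩ := AP_one haff
  have hL0 : 0 ≤ Real.log s := Real.log_nonneg hs
  have hlow : ∀ n : ℕ, 1 ≤ n → Real.log s ≤ Real.log (lapNumber (f^[n]) 0 1) / n := by
    intro n hn
    obtain ⟨p, t, hP, _⟩ := AP_exists hs hm hk h1 n hn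
    have hσ : (0:ℝ) < s^n := pow_pos hs0 n
    obtain ⟨hcpos, hlap⟩ := lap_mem hσ hP
    obtain ⟨τ, hτ0, hτ1, hτlt, hτm⟩ := hlap
    obtain ⟨hP0, hP1, hPlt, hPaf⟩ := hP
    have hsn : s^n ≤ (lapNumber (f^[n]) 0 1 : ℝ) :=
      lap_lower hσ hP0 hP1 hPlt hPaf (hm.iterate n) hτ0 hτ1 hτlt hτm
    have hlog : (n:ℝ) * Real.log s ≤ Real.log (lapNumber (f^[n]) 0 1) := by
      rw [← Real.log_pow]
      exact Real.log_le_log hσ hsn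
    have hn0 : (0:ℝ) < n := by exact_mod_cast hn
    rw [le_div_iff₀ hn0, mul_comm]
    exact hlog
  rw [Metric.tendsto_atTop]
  intro ε hε
  obtain ⟨m', hm'⟩ := exists_nat_gt (max 1 (2 * Real.log 2 / ε))
  have hm'1r : (1:ℝ) < m' := lt_of_le_of_lt (le_max_left _ _) hm'
  have hm1 : 1 ≤ m' := by exact_mod_cast le_of_lt hm'1r
  have hm'pos : (0:ℝ) < m' := by linarith
  have hm2 : Real.log 2 / m' < ε / 2 := by
    have h2 : 2 * Real.log 2 / ε < m' := lt_of_le_of_lt (le_max_right _ _) hm'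
    have h3 : 2 * Real.log 2 < m' * ε := (div_lt_iff₀ hε).mp h2
    rw [div_lt_iff₀ hm'pos]
    linarith
  obtain ⟨qm, tQ, hQ, _⟩ := AP_exists hs hm hk h1 m' hm1
  obtain ⟨ℓ, hℓ, hgap⟩ := exists_gap (AffP_pos hQ) hQ.2.2.1
  set M := max 2 (s^m') with hMdef
  set D := ((((k+2)^m' : ℕ)) : ℝ) + 2 with hDdef
  have hM2 : (2:ℝ) ≤ M := le_max_left _ _
  have hMpos : (0:ℝ) < M := by linarith
  have hD2 : (2:ℝ) ≤ D := by
    have := Nat.cast_nonneg (α := ℝ) ((k+2)^m')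
    rw [hDdef]; linarith
  have hDpos : (0:ℝ) < D := by linarith
  have hsm1 : (1:ℝ) ≤ s^m' := by
    calc (1:ℝ) = 1^m' := (one_pow m').symm
      _ ≤ s^m' := pow_le_pow_left₀ (by norm_num) hs m'
  have hlogM : Real.log M ≤ Real.log 2 + m' * Real.log s := by
    have hub : M ≤ 2 * s^m' := max_le (by linarith) (by linarith)
    calc Real.log M ≤ Real.log (2 * s^m') := Real.log_le_log hMpos hub
      _ = Real.log 2 + m' * Real.log s := by
          rw [Real.log_mul two_ne_zero (by positivity), Real.log_pow]
  have hlogM0 : 0 ≤ Real.log M := Real.log_nonneg (by linarith)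
  have hqm1 : 1 ≤ qm := AffP_pos hQ
  have hqm1r : (1:ℝ) ≤ (qm:ℝ) := by exact_mod_cast hqm1
  set a := D * (1/ℓ) with hadef
  set b := (qm:ℝ) * D with hbdef
  have ha : 0 < a := by rw [hadef]; positivity
  obtain ⟨N1, hN1⟩ := Metric.tendsto_atTop.mp (aux_tendsto (b := b) ha) (ε/2) (by linarith)
  refine ⟨max (max m' 1) N1, ?_⟩
  intro n hn
  have hnm : m' ≤ n := le_trans (le_trans (le_max_left _ _) (le_max_left _ _)) hn
  have hn1 : 1 ≤ n := le_trans (le_trans (le_max_right _ _) (le_max_left _ _)) hn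
  have hnN1 : N1 ≤ n := le_trans (le_max_right _ _) hn
  have hn0 : (0:ℝ) < n := by exact_mod_cast hn1
  obtain ⟨p, t, hP, hpb⟩ := tail_bound hs hm hk h1 hm1 hQ hℓ hgap n hnm
  have hσ : (0:ℝ) < s^n := pow_pos hs0 n
  have hcle : lapNumber (f^[n]) 0 1 ≤ p := lap_le hσ hP
  have hcpos : 0 < lapNumber (f^[n]) 0 1 := (lap_mem hσ hP).1
  have hc0 : (0:ℝ) < (lapNumber (f^[n]) 0 1 : ℝ) := by exact_mod_cast hcpos
  set A := (qm:ℝ) + ((n/m' : ℕ):ℝ) * (1/ℓ) with hAdef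
  have hA1 : (1:ℝ) ≤ A := by
    have h1 : (0:ℝ) ≤ ((n/m' : ℕ):ℝ) * (1/ℓ) := by positivity
    rw [hAdef]; linarith
  have hApos : (0:ℝ) < A := by linarith
  have hq_le : ((n/m' : ℕ):ℝ) ≤ (n:ℝ)/m' := Nat.cast_div_le
  have hp_bound : (lapNumber (f^[n]) 0 1 : ℝ) ≤ (A * M^(n/m')) * D := by
    calc (lapNumber (f^[n]) 0 1 : ℝ) ≤ (p:ℝ) := by exact_mod_cast hcle
      _ ≤ (A * M^(n/m')) * D := hpb
  have hMq : (0:ℝ) < M^(n/m') := pow_pos hMpos _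
  have hlog1 : Real.log (lapNumber (f^[n]) 0 1) ≤
      Real.log (A * D) + ((n/m' : ℕ):ℝ) * Real.log M := by
    have he : (A * M^(n/m')) * D = (A * D) * M^(n/m') := by ring
    calc Real.log (lapNumber (f^[n]) 0 1) ≤ Real.log ((A * M^(n/m')) * D) :=
          Real.log_le_log hc0 hp_bound
      _ = Real.log (A * D) + ((n/m' : ℕ):ℝ) * Real.log M := by
          rw [he, Real.log_mul (ne_of_gt (mul_pos hApos hDpos)) (ne_of_gt hMq), Real.log_pow]
  have hAD_le : A * D ≤ a * n + b := by
    have h1 : ((n/m' : ℕ):ℝ) ≤ (n:ℝ) := le_trans hq_le (div_le_self (by positivity) (le_of_lt hm'1r))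
    have h2 : ((n/m' : ℕ):ℝ) * (1/ℓ) * D ≤ (n:ℝ) * (1/ℓ) * D := by
      apply mul_le_mul_of_nonneg_right _ (le_of_lt hDpos)
      exact mul_le_mul_of_nonneg_right h1 (by positivity)
    rw [hAdef, hadef, hbdef]
    nlinarith
  have hlog2 : Real.log (A * D) ≤ Real.log (a * n + b) :=
    Real.log_le_log (mul_pos hApos hDpos) hAD_le
  have hsplit : Real.log (lapNumber (f^[n]) 0 1) / n ≤
      Real.log (a * n + b) / n + (((n/m' : ℕ):ℝ) * Real.log M) / n := by
    rw [← add_div]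
    apply (div_le_div_iff_of_pos_right hn0).mpr
    linarith
  have hterm2 : (((n/m' : ℕ):ℝ) * Real.log M) / n ≤ Real.log M / m' := by
    have h1 : ((n/m' : ℕ):ℝ) * Real.log M ≤ ((n:ℝ)/m') * Real.log M :=
      mul_le_mul_of_nonneg_right hq_le hlogM0
    have h2 : ((n:ℝ)/m') * Real.log M / n = Real.log M / m' := by
      field_simp
    calc (((n/m' : ℕ):ℝ) * Real.log M) / n ≤ ((n:ℝ)/m') * Real.log M / n :=
          (div_le_div_iff_of_pos_right hn0).mpr h1
      _ = Real.log M / m' := h2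
  have hterm2' : Real.log M / m' < Real.log s + ε/2 := by
    have h1 : Real.log M / m' ≤ (Real.log 2 + m' * Real.log s)/m' :=
      (div_le_div_iff_of_pos_right hm'pos).mpr hlogM
    have h2 : (Real.log 2 + m' * Real.log s)/m' = Real.log 2/m' + Real.log s := by
      field_simp
    rw [h2] at h1
    linarith
  have hterm1 : Real.log (a * n + b) / n < ε/2 := by
    have h1 := hN1 n hnN1
    rw [Real.dist_eq, sub_zero] at h1
    exact lt_of_le_of_lt (le_abs_self _) h1
  have hupper : Real.log (lapNumber (f^[n]) 0 1) / n < Real.log s + ε := by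
    have := hlog2
    have hstep : Real.log (a * n + b) / n + (((n/m' : ℕ):ℝ) * Real.log M) / n
        < ε/2 + (Real.log s + ε/2) := add_lt_add_of_lt_of_le hterm1 (le_of_lt
          (lt_of_le_of_lt hterm2 hterm2'))
    linarith
  have hlower := hlow n hn1
  rw [Real.dist_eq, abs_lt]
  constructor
  · linarith
  · linarith
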